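/- Let {T0, T1} be a [t]-trade on 2^V with |V| = v, and let i ∈ {1,…,v}. Then the pair {T0', T1'} obtained by replacing every block (x_1,…,x_v) of T0 and of T1 by the (v+1)-tuple (x_1,…,x_v,x_i) (duplicating the i-th coordinate) is a [t]-trade on the (v+1)-cube. -/

import Mathlib

/-- The size (number of ones) of a vector of `F_2^v`. -/
def size {v : ℕ} (x : Fin v → ZMod 2) : ℕ :=
  (Finset.univ.filter (fun j => x j = 1)).card

/-- A `[t]`-trade. -/
def IsTrade (t v : ℕ) (T0 T1 : Finset (Fin v → ZMod 2)) : Prop :=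
  Disjoint T0 T1 ∧
  ∀ s : Fin v → ZMod 2, size s ≤ t →
    (T0.filter (fun x => ∀ j, s j = 1 → x j = 1)).card =
    (T1.filter (fun x => ∀ j, s j = 1 → x j = 1)).card

/-- duplicating the `i`-th coordinate of every block
(replacing `(x_1,…,x_v)` by `(x_1,…,x_v,x_i)`) transforms a `[t]`-trade on the
`v`-cube into a `[t]`-trade on the `(v+1)`-cube. -/
theorem tTrade_duplicate_coordinate (v t : ℕ) (T0 T1 : Finset (Fin v → ZMod 2))
    (i : Fin v) (h : IsTrade t v T0 T1) :
    IsTrade t (v + 1)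
      (T0.image (fun x => Fin.snoc x (x i)))
      (T1.image (fun x => Fin.snoc x (x i))) := by
  obtain ⟨hd, hc⟩ := h
  have hinj : Function.Injective (fun x : Fin v → ZMod 2 => (Fin.snoc x (x i) : Fin (v+1) → ZMod 2)) := by
    intro x y hxy
    funext j
    have := congrFun hxy (Fin.castSucc j)
    simpa [Fin.snoc_castSucc] using this
  constructor
  · exact (Finset.disjoint_image hinj).mpr hd
  · intro s hs
    set s' : Fin v → ZMod 2 :=
      fun j => if s (Fin.castSucc j) = 1 ∨ (j = i ∧ s (Fin.last v) = 1) then 1 else 0 with hs'def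
    have hs'one : ∀ j, s' j = 1 ↔ (s (Fin.castSucc j) = 1 ∨ (j = i ∧ s (Fin.last v) = 1)) := by
      intro j
      simp only [hs'def]
      split <;> simp_all
    have hsize : size s' ≤ size s := by
      apply Finset.card_le_card_of_injOn
        (fun j => if s (Fin.castSucc j) = 1 then Fin.castSucc j else Fin.last v)
      · intro j hj
        simp only [Finset.mem_coe, Finset.mem_filter, Finset.mem_univ, true_and] at hj ⊢
        rcases (hs'one j).mp hj with h1 | ⟨_, h2⟩
        · simp [h1]
        · split <;> simp_all
      · intro a ha b hb hab
        simp only [Finset.mem_coe, Finset.mem_filter, Finset.mem_univ, true_and] at ha hb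
        by_cases h1 : s (Fin.castSucc a) = 1 <;> by_cases h2 : s (Fin.castSucc b) = 1 <;>
          simp only [h1, h2, if_pos, if_neg, if_true, if_false] at hab
        · exact Fin.castSucc_injective v hab
        · exact absurd hab (Fin.ne_last_of_lt (Fin.castSucc_lt_last a))
        · exact absurd hab.symm (Fin.ne_last_of_lt (Fin.castSucc_lt_last b))
        · rcases (hs'one a).mp ha with h | ⟨ha', _⟩
          · exact absurd h h1
          · rcases (hs'one b).mp hb with h | ⟨hb', _⟩
            · exact absurd h h2
            · rw [ha', hb']
    have hequiv : ∀ x : Fin v → ZMod 2,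
        (∀ j : Fin (v+1), s j = 1 → (Fin.snoc x (x i) : Fin (v+1) → ZMod 2) j = 1) ↔ (∀ j, s' j = 1 → x j = 1) := by
      intro x
      constructor
      · intro hP j hj
        rcases (hs'one j).mp hj with h1 | ⟨hji, h2⟩
        · have := hP (Fin.castSucc j) h1
          simpa [Fin.snoc_castSucc] using this
        · have := hP (Fin.last v) h2
          simp only [Fin.snoc_last] at this
          rw [hji]; exact this
      · intro hQ j hj
        refine Fin.lastCases ?_ ?_ j hj
        · intro hlast
          have : s' i = 1 := (hs'one i).mpr (Or.inr ⟨rfl, hlast⟩)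
          simpa [Fin.snoc_last] using hQ i this
        · intro k hk
          have : s' k = 1 := (hs'one k).mpr (Or.inl hk)
          simpa [Fin.snoc_castSucc] using hQ k this
    have key : ∀ T : Finset (Fin v → ZMod 2),
        ((T.image (fun x => (Fin.snoc x (x i) : Fin (v+1) → ZMod 2))).filter
          (fun y => ∀ j, s j = 1 → y j = 1)).card =
        (T.filter (fun x => ∀ j, s' j = 1 → x j = 1)).card := by
      intro T
      rw [Finset.filter_image, Finset.card_image_of_injective _ hinj]
      congr 1
      apply Finset.filter_congr
      intro x _
      simpa using hequiv x
    rw [key, key]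
    exact hc s' (le_trans hsize hs)
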